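/- Interior regularity across a sign-change point, strong form of Theorem 3.3(hh). Let ψ(s) = s/√(1+s²), let c ∈ (a,b), let f : (a,b) × ℝ → ℝ, and let u ∈ W^{1,1}(a,b) be differentiable on (a,b)∖{c} with u' locally absolutely continuous on (a,c) and on (c,b). Suppose there is an absolutely continuous function w on [a,b] with derivative w' ∈ L¹(a,b) such that w(x) = ψ(u'(x)) for every x ∈ (a,b)∖{c} and w'(x) = −f(x, u(x)) for almost every x ∈ (a,b). Assume f(x, u(x)) ≤ 0 for almost every x ∈ (a,c) and f(x, u(x)) ≥ 0 for almost every x ∈ (c,b). Assume further that either (left condition) there exist δ > 0 and ν ∈ L¹(c−δ, c) with f(x, u(x)) ≥ ν(x) for almost every x ∈ (c−δ, c), N(x) := ∫ₓ^c ν(t) dt < 0 for all x ∈ [c−δ, c), and ∫_{c−δ}^c dx/√(−N(x)) = +∞; or (right condition) there exist δ > 0 and μ ∈ L¹(c, c+δ) with f(x, u(x)) ≤ μ(x) for almost every x ∈ (c, c+δ), M(x) := ∫_c^x μ(t) dt > 0 for all x ∈ (c, c+δ], and ∫_c^{c+δ} dx/√(M(x)) = +∞. Then |w(c)| < 1, u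 is continuously differentiable on all of (a,b) with u' locally absolutely continuous on (a,b), and −(u'(x)/√(1+u'(x)²))' = f(x, u(x)) for almost every x ∈ (a,b). -/

import Mathlib

open Set Filter MeasureTheory Topology
open intervalIntegral

section AuxiliaryLemmas


lemma ae_hasDerivAt_primitive {f : ℝ → ℝ} (hf : Integrable f) (a : ℝ) :
    ∀ᵐ x, HasDerivAt (fun y => ∫ t in a..y, f t) (f x) x := by
  filter_upwards [IsUnifLocDoublingMeasure.ae_tendsto_average_norm_sub
    (μ := (volume : Measure ℝ)) hf.locallyIntegrable 1] with x hx
  have hδ : Tendsto (fun y : ℝ => |y - x|) (𝓝[≠] x) (𝓝[>] 0) := by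
    rw [tendsto_nhdsWithin_iff]
    constructor
    · have : Tendsto (fun y : ℝ => |y - x|) (𝓝 x) (𝓝 |x - x|) :=
        ((continuous_id.sub continuous_const).abs).tendsto x
      simpa using this.mono_left nhdsWithin_le_nhds
    · filter_upwards [self_mem_nhdsWithin] with y hy
      exact abs_pos.2 (sub_ne_zero.2 hy)
  have hmem : ∀ᶠ y : ℝ in 𝓝[≠] x, x ∈ Metric.closedBall x (1 * |y - x|) := by
    filter_upwards with y
    simp [abs_nonneg]
  have havg := hx (fun _ : ℝ => x) (fun y => |y - x|) hδ hmem
  set F : ℝ → ℝ := fun y => ∫ t in a..y, f t with hFdef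
  rw [hasDerivAt_iff_tendsto_slope]
  rw [tendsto_iff_dist_tendsto_zero]
  have key : ∀ y : ℝ, y ≠ x →
      dist (slope F x y) (f x) ≤ 2 * ⨍ t in Metric.closedBall x |y - x|, ‖f t - f x‖ := by
    intro y hy
    have hyx : y - x ≠ 0 := sub_ne_zero.2 hy
    have h1 : slope F x y - f x = (∫ t in x..y, (f t - f x)) / (y - x) := by
      rw [slope_def_field, hFdef]
      simp only
      rw [intervalIntegral.integral_sub hf.intervalIntegrable
        (intervalIntegrable_const), intervalIntegral.integral_const,
        integral_interval_sub_left hf.intervalIntegrable hf.intervalIntegrable]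
      field_simp
      rw [smul_eq_mul]
    have hsub : uIoc x y ⊆ Metric.closedBall x |y - x| := by
      intro t ht
      rw [Metric.mem_closedBall, Real.dist_eq]
      rcases le_total x y with h | h
      · rw [uIoc_of_le h] at ht
        rw [abs_of_nonneg (sub_nonneg.2 ht.1.le), abs_of_nonneg (sub_nonneg.2 h)]
        linarith [ht.2]
      · rw [uIoc_of_ge h] at ht
        rw [abs_of_nonpos (sub_nonpos.2 ht.2), abs_of_nonpos (sub_nonpos.2 h)]
        linarith [ht.1]
    have hint : IntegrableOn (fun t => ‖f t - f x‖) (Metric.closedBall x |y - x|) := by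
      exact (hf.integrableOn.sub (integrableOn_const measure_closedBall_lt_top.ne)).norm
    have h2 : ‖∫ t in x..y, (f t - f x)‖ ≤ ∫ t in Metric.closedBall x |y - x|, ‖f t - f x‖ := by
      refine le_trans (intervalIntegral.norm_integral_le_integral_norm_uIoc) ?_
      refine setIntegral_mono_set hint ?_ (HasSubset.Subset.eventuallyLE hsub)
      filter_upwards with t using norm_nonneg _
    have hvol : (volume (Metric.closedBall x |y - x|)).toReal = 2 * |y - x| := by
      rw [Real.volume_closedBall, ENNReal.toReal_ofReal (by positivity)]
    have h3 : ∫ t in Metric.closedBall x |y - x|, ‖f t - f x‖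
        = (2 * |y - x|) * ⨍ t in Metric.closedBall x |y - x|, ‖f t - f x‖ := by
      rw [setAverage_eq, measureReal_def, hvol, smul_eq_mul, ← mul_assoc]
      rw [mul_inv_cancel₀ (by positivity : (2:ℝ) * |y - x| ≠ 0), one_mul]
    rw [Real.dist_eq, h1, abs_div, ← Real.norm_eq_abs (∫ t in x..y, (f t - f x))]
    rw [h3] at h2
    calc ‖∫ t in x..y, (f t - f x)‖ / |y - x|
        ≤ ((2 * |y - x|) * ⨍ t in Metric.closedBall x |y - x|, ‖f t - f x‖) / |y - x| := by
          gcongr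
      _ = 2 * ⨍ t in Metric.closedBall x |y - x|, ‖f t - f x‖ := by
          field_simp
  refine squeeze_zero' ?_ ?_ (by simpa using havg.const_mul 2)
  · filter_upwards with y using dist_nonneg
  · filter_upwards [self_mem_nhdsWithin] with y hy using key y hy

lemma psi_abs_lt_one (s : ℝ) : |s / Real.sqrt (1 + s ^ 2)| < 1 := by
  have h : 0 < Real.sqrt (1 + s ^ 2) := Real.sqrt_pos.2 (by positivity)
  rw [abs_div, abs_of_pos h, div_lt_one h, ← Real.sqrt_sq_eq_abs]
  exact Real.sqrt_lt_sqrt (by positivity) (by linarith)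

lemma one_sub_psi_sq (s : ℝ) :
    1 - (s / Real.sqrt (1 + s ^ 2)) ^ 2 = (1 + s ^ 2)⁻¹ := by
  rw [div_pow, Real.sq_sqrt (by positivity : (0:ℝ) ≤ 1 + s ^ 2)]
  field_simp
  ring

lemma sqrt_one_sub_psi_sq (s : ℝ) :
    Real.sqrt (1 - (s / Real.sqrt (1 + s ^ 2)) ^ 2) = (Real.sqrt (1 + s ^ 2))⁻¹ := by
  rw [one_sub_psi_sq, Real.sqrt_inv]

lemma psi_inv (s : ℝ) :
    (s / Real.sqrt (1 + s ^ 2)) / Real.sqrt (1 - (s / Real.sqrt (1 + s ^ 2)) ^ 2) = s := by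
  have h : 0 < Real.sqrt (1 + s ^ 2) := Real.sqrt_pos.2 (by positivity)
  rw [sqrt_one_sub_psi_sq]
  field_simp

lemma hasDerivAt_psi (s : ℝ) :
    HasDerivAt (fun s => s / Real.sqrt (1 + s ^ 2))
      (1 / (Real.sqrt (1 + s ^ 2) * (1 + s ^ 2))) s := by
  have hpos : (0:ℝ) < 1 + s ^ 2 := by positivity
  have hr : 0 < Real.sqrt (1 + s ^ 2) := Real.sqrt_pos.2 hpos
  have hr2 : Real.sqrt (1 + s ^ 2) ^ 2 = 1 + s ^ 2 := Real.sq_sqrt hpos.le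
  have hq : HasDerivAt (fun s : ℝ => 1 + s ^ 2) (2 * s) s := by
    simpa [mul_comm] using ((hasDerivAt_pow 2 s).const_add 1)
  have hsq : HasDerivAt (fun s : ℝ => Real.sqrt (1 + s ^ 2))
      (2 * s / (2 * Real.sqrt (1 + s ^ 2))) s := hq.sqrt (ne_of_gt hpos)
  have hdiv := (hasDerivAt_id s).div hsq (ne_of_gt hr)
  refine hdiv.congr_deriv (Eq.symm ?_)
  simp only [id]
  field_simp
  linear_combination (-s ^ 2) * hr2

lemma hasDerivAt_phi {t : ℝ} (ht : |t| < 1) :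
    HasDerivAt (fun t => t / Real.sqrt (1 - t ^ 2))
      (1 / (Real.sqrt (1 - t ^ 2) * (1 - t ^ 2))) t := by
  have hpos : (0:ℝ) < 1 - t ^ 2 := by
    have := abs_lt.1 ht; nlinarith
  have hr : 0 < Real.sqrt (1 - t ^ 2) := Real.sqrt_pos.2 hpos
  have hr2 : Real.sqrt (1 - t ^ 2) ^ 2 = 1 - t ^ 2 := Real.sq_sqrt hpos.le
  have hq : HasDerivAt (fun t : ℝ => 1 - t ^ 2) (-(2 * t)) t := by
    simpa [mul_comm] using ((hasDerivAt_pow 2 t).const_sub 1)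
  have hsq : HasDerivAt (fun t : ℝ => Real.sqrt (1 - t ^ 2))
      (-(2 * t) / (2 * Real.sqrt (1 - t ^ 2))) t := hq.sqrt (ne_of_gt hpos)
  have hdiv := (hasDerivAt_id t).div hsq (ne_of_gt hr)
  refine hdiv.congr_deriv (Eq.symm ?_)
  simp only [id]
  field_simp
  linear_combination t ^ 2 * hr2

lemma phi_deriv_mul_psi_deriv (s : ℝ) :
    (1 / (Real.sqrt (1 - (s / Real.sqrt (1 + s ^ 2)) ^ 2)
        * (1 - (s / Real.sqrt (1 + s ^ 2)) ^ 2)))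
      * (1 / (Real.sqrt (1 + s ^ 2) * (1 + s ^ 2))) = 1 := by
  have hpos : (0:ℝ) < 1 + s ^ 2 := by positivity
  have hr : 0 < Real.sqrt (1 + s ^ 2) := Real.sqrt_pos.2 hpos
  rw [sqrt_one_sub_psi_sq, one_sub_psi_sq]
  field_simp

lemma aux_right (c δ : ℝ) (hδ : 0 < δ) (M U : ℝ → ℝ)
    (hMcont : ContinuousOn M (Icc c (c + δ))) (hM0 : M c = 0)
    (hMpos : ∀ x ∈ Ioc c (c + δ), 0 < M x)
    (hU : IntegrableOn U (Ioo c (c + δ)))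
    (hbound : ∀ x ∈ Ioo c (c + δ), M x < 1/2 →
      1 / Real.sqrt (M x) ≤ 2 * Real.sqrt 2 * U x) :
    IntegrableOn (fun x => 1 / Real.sqrt (M x)) (Ioo c (c + δ)) := by
  -- find ε
  have hcmem : c ∈ Icc c (c + δ) := ⟨le_refl c, by linarith⟩
  have hMc : ContinuousWithinAt M (Icc c (c + δ)) c := hMcont c hcmem
  have hev : M ⁻¹' (Iio (1/2)) ∈ 𝓝[Icc c (c + δ)] c := by
    apply hMc
    rw [hM0]
    exact Iio_mem_nhds (by norm_num)
  rw [Metric.mem_nhdsWithin_iff] at hev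
  obtain ⟨ε₀, hε₀, hsub⟩ := hev
  set ε := min (ε₀ / 2) δ with hεdef
  have hε : 0 < ε := lt_min (by linarith) hδ
  have hεδ : ε ≤ δ := min_le_right _ _
  have hsmall : ∀ x ∈ Ioc c (c + ε), M x < 1/2 := by
    intro x hx
    have : x ∈ Metric.ball c ε₀ ∩ Icc c (c + δ) := by
      constructor
      · rw [Metric.mem_ball, Real.dist_eq, abs_of_nonneg (by linarith [hx.1] : (0:ℝ) ≤ x - c)]
        have : x ≤ c + ε := hx.2
        have : ε ≤ ε₀ / 2 := min_le_left _ _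
        linarith [hx.2]
      · exact ⟨hx.1.le, by linarith [hx.2]⟩
    exact hsub this
  -- integrable near c
  have hsub1 : Ioo c (c + ε) ⊆ Ioo c (c + δ) := Ioo_subset_Ioo le_rfl (by linarith)
  have hsub1' : Ioo c (c + ε) ⊆ Icc c (c + δ) := hsub1.trans Ioo_subset_Icc_self
  have hcont1 : ContinuousOn (fun x => 1 / Real.sqrt (M x)) (Ioo c (c + ε)) := by
    apply continuousOn_const.div
    · exact Real.continuous_sqrt.comp_continuousOn (hMcont.mono hsub1')
    · intro x hx
      exact ne_of_gt (Real.sqrt_pos.2 (hMpos x ⟨hx.1, by linarith [hx.2]⟩))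
  have h1 : IntegrableOn (fun x => 1 / Real.sqrt (M x)) (Ioo c (c + ε)) := by
    apply Integrable.mono' (((hU.mono_set hsub1).const_mul (2 * Real.sqrt 2)))
      (hcont1.aestronglyMeasurable measurableSet_Ioo)
    rw [ae_restrict_iff' measurableSet_Ioo]
    filter_upwards with x hx
    rw [Real.norm_eq_abs, abs_of_nonneg (by positivity)]
    exact hbound x (hsub1 hx) (hsmall x ⟨hx.1, hx.2.le⟩)
  -- integrable away from c
  have hsub2 : Icc (c + ε) (c + δ) ⊆ Icc c (c + δ) := Icc_subset_Icc (by linarith) le_rfl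
  have h2 : IntegrableOn (fun x => 1 / Real.sqrt (M x)) (Icc (c + ε) (c + δ)) := by
    apply ContinuousOn.integrableOn_Icc
    apply continuousOn_const.div
    · exact Real.continuous_sqrt.comp_continuousOn (hMcont.mono hsub2)
    · intro x hx
      exact ne_of_gt (Real.sqrt_pos.2 (hMpos x ⟨by linarith [hx.1], hx.2⟩))
  exact (h1.union h2).mono_set (by
    intro x hx
    rcases lt_or_ge x (c + ε) with h | h
    · exact Or.inl ⟨hx.1, h⟩
    · exact Or.inr ⟨h, hx.2.le⟩)

lemma aux_left (c δ : ℝ) (hδ : 0 < δ) (M U : ℝ → ℝ)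
    (hMcont : ContinuousOn M (Icc (c - δ) c)) (hM0 : M c = 0)
    (hMpos : ∀ x ∈ Ico (c - δ) c, 0 < M x)
    (hU : IntegrableOn U (Ioo (c - δ) c))
    (hbound : ∀ x ∈ Ioo (c - δ) c, M x < 1/2 →
      1 / Real.sqrt (M x) ≤ 2 * Real.sqrt 2 * U x) :
    IntegrableOn (fun x => 1 / Real.sqrt (M x)) (Ioo (c - δ) c) := by
  have hcmem : c ∈ Icc (c - δ) c := ⟨by linarith, le_refl c⟩
  have hMc : ContinuousWithinAt M (Icc (c - δ) c) c := hMcont c hcmem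
  have hev : M ⁻¹' (Iio (1/2)) ∈ 𝓝[Icc (c - δ) c] c := by
    apply hMc
    rw [hM0]
    exact Iio_mem_nhds (by norm_num)
  rw [Metric.mem_nhdsWithin_iff] at hev
  obtain ⟨ε₀, hε₀, hsub⟩ := hev
  set ε := min (ε₀ / 2) δ with hεdef
  have hε : 0 < ε := lt_min (by linarith) hδ
  have hεδ : ε ≤ δ := min_le_right _ _
  have hsmall : ∀ x ∈ Ico (c - ε) c, M x < 1/2 := by
    intro x hx
    have : x ∈ Metric.ball c ε₀ ∩ Icc (c - δ) c := by
      constructor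
      · rw [Metric.mem_ball, Real.dist_eq, abs_of_nonpos (by linarith [hx.2] : x - c ≤ 0)]
        have : ε ≤ ε₀ / 2 := min_le_left _ _
        linarith [hx.1]
      · exact ⟨by linarith [hx.1], hx.2.le⟩
    exact hsub this
  have hsub1 : Ioo (c - ε) c ⊆ Ioo (c - δ) c := Ioo_subset_Ioo (by linarith) le_rfl
  have hsub1' : Ioo (c - ε) c ⊆ Icc (c - δ) c := hsub1.trans Ioo_subset_Icc_self
  have hcont1 : ContinuousOn (fun x => 1 / Real.sqrt (M x)) (Ioo (c - ε) c) := by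
    apply continuousOn_const.div
    · exact Real.continuous_sqrt.comp_continuousOn (hMcont.mono hsub1')
    · intro x hx
      exact ne_of_gt (Real.sqrt_pos.2 (hMpos x ⟨by linarith [hx.1], hx.2⟩))
  have h1 : IntegrableOn (fun x => 1 / Real.sqrt (M x)) (Ioo (c - ε) c) := by
    apply Integrable.mono' (((hU.mono_set hsub1).const_mul (2 * Real.sqrt 2)))
      (hcont1.aestronglyMeasurable measurableSet_Ioo)
    rw [ae_restrict_iff' measurableSet_Ioo]
    filter_upwards with x hx
    rw [Real.norm_eq_abs, abs_of_nonneg (by positivity)]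
    exact hbound x (hsub1 hx) (hsmall x ⟨hx.1.le, hx.2⟩)
  have hsub2 : Icc (c - δ) (c - ε) ⊆ Icc (c - δ) c := Icc_subset_Icc le_rfl (by linarith)
  have h2 : IntegrableOn (fun x => 1 / Real.sqrt (M x)) (Icc (c - δ) (c - ε)) := by
    apply ContinuousOn.integrableOn_Icc
    apply continuousOn_const.div
    · exact Real.continuous_sqrt.comp_continuousOn (hMcont.mono hsub2)
    · intro x hx
      exact ne_of_gt (Real.sqrt_pos.2 (hMpos x ⟨hx.1, by linarith [hx.2]⟩))
  exact (h2.union h1).mono_set (by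
    intro x hx
    rcases le_or_gt x (c - ε) with h | h
    · exact Or.inl ⟨hx.1.le, h⟩
    · exact Or.inr ⟨h, hx.2⟩)

lemma aux_bound {W M U : ℝ} (hwlt : W < 1) (hge : 1 - M ≤ W) (hM2 : M < 1/2) (hMpos : 0 < M)
    (hU : U = W / Real.sqrt (1 - W ^ 2)) : 1 / Real.sqrt M ≤ 2 * Real.sqrt 2 * U := by
  have hwhalf : 1/2 ≤ W := by linarith
  have hsqpos : 0 < 1 - W ^ 2 := by nlinarith
  have hsq : 1 - W ^ 2 ≤ 2 * M := by nlinarith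
  have hspos : 0 < Real.sqrt (1 - W ^ 2) := Real.sqrt_pos.2 hsqpos
  have hs2 : Real.sqrt (1 - W ^ 2) ≤ Real.sqrt (2 * M) := Real.sqrt_le_sqrt hsq
  have h2M : 0 < Real.sqrt (2 * M) := Real.sqrt_pos.2 (by linarith)
  have hstep : (1/2) / Real.sqrt (2 * M) ≤ U := by
    rw [hU]
    exact div_le_div₀ (by linarith) hwhalf hspos hs2
  have h2Msqrt : Real.sqrt (2 * M) = Real.sqrt 2 * Real.sqrt M := Real.sqrt_mul (by norm_num) _
  have hMs : 0 < Real.sqrt M := Real.sqrt_pos.2 hMpos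
  have h2s : (0:ℝ) < Real.sqrt 2 := by positivity
  calc 1 / Real.sqrt M = 2 * Real.sqrt 2 * ((1/2) / (Real.sqrt 2 * Real.sqrt M)) := by
        field_simp
    _ ≤ 2 * Real.sqrt 2 * U := by
        apply mul_le_mul_of_nonneg_left _ (by positivity)
        rw [← h2Msqrt]; exact hstep

end AuxiliaryLemmas

/-- **Interior regularity across a sign-change point (Theorem 3.3(hh), strong form).**
`u ∈ W^{1,1}(a,b)` is differentiable off `c`, with `u'` locally absolutely continuous on
`(a,c)` and `(c,b)`; the flux `w` is absolutely continuous on `[a,b]` with `w = ψ(u')` off `c`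
and `w' = -f(x,u)` a.e.; `f(·,u(·)) ≤ 0` on `(a,c)` and `≥ 0` on `(c,b)`; and an integral decay
condition holds on the left or on the right of `c`. Then `|w(c)| < 1`, `u` is C¹ on the whole
of `(a,b)` with derivative `ψ⁻¹(w)` locally absolutely continuous, and the prescribed curvature
equation `-(ψ(u'))' = f(x,u)` holds a.e. in `(a,b)`. -/
theorem interior_regularity_sign_change_hh
    (a b c : ℝ) (hc : c ∈ Ioo a b) (f : ℝ → ℝ → ℝ) (u u' w w' : ℝ → ℝ)
    -- u ∈ W^{1,1}(a,b)
    (hu_cont : ContinuousOn u (Icc a b))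
    (hu'_int : IntegrableOn u' (Ioo a b))
    (hu_ftc : ∀ x ∈ Icc a b, u x = u a + ∫ t in a..x, u' t)
    -- u is differentiable on (a,b) ∖ {c}
    (hu_deriv : ∀ x ∈ Ioo a b, x ≠ c → HasDerivAt u (u' x) x)
    -- u' is locally absolutely continuous on (a,c) and on (c,b)
    (hlocAC₁ : ∀ c₁ d₁ : ℝ, a < c₁ → c₁ ≤ d₁ → d₁ < c → ∃ V : ℝ → ℝ,
      IntegrableOn V (Icc c₁ d₁) ∧ ∀ x ∈ Icc c₁ d₁, u' x = u' c₁ + ∫ t in c₁..x, V t)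
    (hlocAC₂ : ∀ c₁ d₁ : ℝ, c < c₁ → c₁ ≤ d₁ → d₁ < b → ∃ V : ℝ → ℝ,
      IntegrableOn V (Icc c₁ d₁) ∧ ∀ x ∈ Icc c₁ d₁, u' x = u' c₁ + ∫ t in c₁..x, V t)
    -- the flux w is absolutely continuous on [a,b] with derivative w' ∈ L¹(a,b)
    (hw'_int : IntegrableOn w' (Ioo a b))
    (hw_ftc : ∀ x ∈ Icc a b, w x = w a + ∫ t in a..x, w' t)
    (hw_eq : ∀ x ∈ Ioo a b, x ≠ c → w x = u' x / Real.sqrt (1 + u' x ^ 2))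
    (hw' : ∀ᵐ x ∂volume, x ∈ Ioo a b → w' x = -f x (u x))
    -- sign conditions
    (hsign₁ : ∀ᵐ x ∂volume, x ∈ Ioo a c → f x (u x) ≤ 0)
    (hsign₂ : ∀ᵐ x ∂volume, x ∈ Ioo c b → 0 ≤ f x (u x))
    -- integral decay condition on the left or on the right of c
    (hdecay :
      (∃ δ > (0:ℝ), a ≤ c - δ ∧ ∃ ν : ℝ → ℝ,
        IntegrableOn ν (Ioo (c - δ) c) ∧
        (∀ᵐ x ∂volume, x ∈ Ioo (c - δ) c → ν x ≤ f x (u x)) ∧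
        (∀ x ∈ Ico (c - δ) c, (∫ t in x..c, ν t) < 0) ∧
        ¬ IntegrableOn (fun x => 1 / Real.sqrt (-(∫ t in x..c, ν t))) (Ioo (c - δ) c)) ∨
      (∃ δ > (0:ℝ), c + δ ≤ b ∧ ∃ μ : ℝ → ℝ,
        IntegrableOn μ (Ioo c (c + δ)) ∧
        (∀ᵐ x ∂volume, x ∈ Ioo c (c + δ) → f x (u x) ≤ μ x) ∧
        (∀ x ∈ Ioc c (c + δ), 0 < ∫ t in c..x, μ t) ∧
        ¬ IntegrableOn (fun x => 1 / Real.sqrt (∫ t in c..x, μ t)) (Ioo c (c + δ)))) :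
    |w c| < 1 ∧
    (∀ x ∈ Ioo a b, HasDerivAt u (w x / Real.sqrt (1 - w x ^ 2)) x) ∧
    ContinuousOn (fun x => w x / Real.sqrt (1 - w x ^ 2)) (Ioo a b) ∧
    (∀ c₁ d₁ : ℝ, a < c₁ → c₁ ≤ d₁ → d₁ < b → ∃ V : ℝ → ℝ,
      IntegrableOn V (Icc c₁ d₁) ∧ ∀ x ∈ Icc c₁ d₁,
        w x / Real.sqrt (1 - w x ^ 2) = w c₁ / Real.sqrt (1 - w c₁ ^ 2) + ∫ t in c₁..x, V t) ∧
    (∀ᵐ x ∂volume, x ∈ Ioo a b → HasDerivAt w (-f x (u x)) x) := by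
  obtain ⟨hac, hcb⟩ := hc
  have hab : a < b := hac.trans hcb
  have hcab : c ∈ Icc a b := ⟨hac.le, hcb.le⟩
  have hne : ∀ z : ℝ, ∀ᵐ t : ℝ ∂volume, t ≠ z := by
    intro z
    rw [ae_iff]
    have h : {t : ℝ | ¬ t ≠ z} = {z} := by ext t; simp
    rw [h]; exact measure_singleton z
  have hu'Icc : IntegrableOn u' (Icc a b) := hu'_int.congr_set_ae Ioo_ae_eq_Icc.symm
  have hw'Icc : IntegrableOn w' (Icc a b) := hw'_int.congr_set_ae Ioo_ae_eq_Icc.symm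
  have hu'ii : ∀ p ∈ Icc a b, ∀ q ∈ Icc a b, IntervalIntegrable u' volume p q :=
    fun p hp q hq => (hu'Icc.mono_set (uIcc_subset_Icc hp hq)).intervalIntegrable
  have hw'ii : ∀ p ∈ Icc a b, ∀ q ∈ Icc a b, IntervalIntegrable w' volume p q :=
    fun p hp q hq => (hw'Icc.mono_set (uIcc_subset_Icc hp hq)).intervalIntegrable
  have hwdiff : ∀ p ∈ Icc a b, ∀ q ∈ Icc a b, w q - w p = ∫ t in p..q, w' t := by
    intro p hp q hq
    rw [hw_ftc q hq, hw_ftc p hp, add_sub_add_left_eq_sub]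
    exact integral_interval_sub_left (hw'ii a ⟨le_refl a, hab.le⟩ q hq)
      (hw'ii a ⟨le_refl a, hab.le⟩ p hp)
  have hudiff : ∀ p ∈ Icc a b, ∀ q ∈ Icc a b, u q - u p = ∫ t in p..q, u' t := by
    intro p hp q hq
    rw [hu_ftc q hq, hu_ftc p hp, add_sub_add_left_eq_sub]
    exact integral_interval_sub_left (hu'ii a ⟨le_refl a, hab.le⟩ q hq)
      (hu'ii a ⟨le_refl a, hab.le⟩ p hp)
  -- continuity and a.e. differentiability of w
  set w₀ : ℝ → ℝ := (Icc a b).indicator w' with hw₀def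
  have hw₀int : Integrable w₀ := hw'Icc.integrable_indicator measurableSet_Icc
  have hweq : ∀ x ∈ Icc a b, w x = w a + ∫ t in a..x, w₀ t := by
    intro x hx
    rw [hw_ftc x hx]
    congr 1
    apply intervalIntegral.integral_congr
    intro t ht
    rw [uIcc_of_le hx.1] at ht
    exact (indicator_of_mem (show t ∈ Icc a b from ⟨ht.1, ht.2.trans hx.2⟩) w').symm
  have hwcont : ContinuousOn w (Icc a b) :=
    ((continuous_const.add (hw₀int.continuous_primitive a)).continuousOn).congr hweq
  have hwca : ∀ x ∈ Ioo a b, ContinuousAt w x :=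
    fun x hx => hwcont.continuousAt (Icc_mem_nhds hx.1 hx.2)
  have haewd : ∀ᵐ x ∂volume, x ∈ Ioo a b → HasDerivAt w (w' x) x := by
    filter_upwards [ae_hasDerivAt_primitive hw₀int a] with x hx hxab
    have hev : w =ᶠ[𝓝 x] fun y => w a + ∫ t in a..y, w₀ t :=
      eventuallyEq_of_mem (Icc_mem_nhds hxab.1 hxab.2) hweq
    have h2 := (hx.const_add (w a)).congr_of_eventuallyEq hev
    rwa [hw₀def, indicator_of_mem (Ioo_subset_Icc_self hxab)] at h2
  have habs1 : ∀ x ∈ Ioo a b, x ≠ c → |w x| < 1 := by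
    intro x hx hxc
    rw [hw_eq x hx hxc]
    exact psi_abs_lt_one _
  -- -1 < w c
  have hwcgt : -1 < w c := by
    set x₀ : ℝ := (a + c)/2 with hx₀def
    have hx₀ : x₀ ∈ Ioo a c := by
      rw [hx₀def, Set.mem_Ioo]
      constructor <;> linarith
    have hx₀ab : x₀ ∈ Ioo a b := ⟨hx₀.1, hx₀.2.trans hcb⟩
    have h1 : w x₀ ≤ w c := by
      have hdq := hwdiff x₀ (Ioo_subset_Icc_self hx₀ab) c hcab
      have hge : 0 ≤ ∫ t in x₀..c, w' t := by
        apply intervalIntegral.integral_nonneg_of_ae_restrict hx₀.2.le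
        refine (ae_restrict_iff' measurableSet_Icc).2 ?_
        filter_upwards [hw', hsign₁, hne c] with t h1 h2 h3 ht
        simp only [Pi.zero_apply]
        have htac : t ∈ Ioo a c := ⟨hx₀.1.trans_le ht.1, lt_of_le_of_ne ht.2 h3⟩
        rw [h1 ⟨htac.1, htac.2.trans hcb⟩]
        linarith [h2 htac]
      linarith
    have hwx₀ : -1 < w x₀ := (abs_lt.1 (habs1 x₀ hx₀ab (ne_of_lt hx₀.2))).1
    linarith
  -- w c < 1
  have hwclt : w c < 1 := by
    by_contra hcon
    push_neg at hcon
    rcases hdecay with ⟨δ, hδ, haδ, ν, hνint, hνae, hNneg, hNnon⟩ |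
      ⟨δ, hδ, hδb, μf, hμint, hμae, hMpos, hMnon⟩
    · -- left condition
      apply hNnon
      have hνIcc : IntegrableOn ν (Icc (c - δ) c) := hνint.congr_set_ae Ioo_ae_eq_Icc.symm
      have hMcont : ContinuousOn (fun x => -(∫ t in x..c, ν t)) (Icc (c - δ) c) := by
        have h := intervalIntegral.continuousOn_primitive_interval_left
          (a := c - δ) (b := c) (f := ν) (μ := volume)
          (by rwa [uIcc_of_le (by linarith : c - δ ≤ c)])
        rw [uIcc_of_le (by linarith : c - δ ≤ c)] at h
        exact h.neg
      refine aux_left c δ hδ _ u' hMcont (by simp) ?_ ?_ ?_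
      · intro x hx
        have := hNneg x hx
        simp only [neg_pos]
        linarith
      · exact hu'_int.mono_set (fun x hx =>
          ⟨lt_of_le_of_lt haδ hx.1, hx.2.trans hcb⟩)
      · intro x hx hMx
        have hxab : x ∈ Ioo a b := ⟨lt_of_le_of_lt haδ hx.1, hx.2.trans hcb⟩
        have hxc : x ≠ c := ne_of_lt hx.2
        have hdq := hwdiff x (Ioo_subset_Icc_self hxab) c hcab
        have hmono : (∫ t in x..c, w' t) ≤ ∫ t in x..c, -ν t := by
          apply intervalIntegral.integral_mono_ae_restrict hx.2.le
            (hw'ii x (Ioo_subset_Icc_self hxab) c hcab)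
            ((hνIcc.mono_set (uIcc_subset_Icc ⟨hx.1.le, hx.2.le⟩
              ⟨by linarith, le_refl c⟩)).intervalIntegrable.neg)
          refine (ae_restrict_iff' measurableSet_Icc).2 ?_
          filter_upwards [hw', hνae, hne c] with t h1 h2 h3 ht
          simp only [Pi.neg_apply]
          have htio : t ∈ Ioo (c - δ) c := ⟨hx.1.trans_le ht.1, lt_of_le_of_ne ht.2 h3⟩
          have htab : t ∈ Ioo a b := ⟨lt_of_le_of_lt haδ htio.1, htio.2.trans hcb⟩
          rw [h1 htab]
          linarith [h2 htio]
        rw [intervalIntegral.integral_neg] at hmono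
        have hwxge : 1 - (-(∫ t in x..c, ν t)) ≤ w x := by linarith
        have hwxlt : w x < 1 := (abs_lt.1 (habs1 x hxab hxc)).2
        refine aux_bound hwxlt hwxge hMx ?_ ?_
        · have := hNneg x ⟨by linarith [hx.1], hx.2⟩
          linarith
        · have h := psi_inv (u' x)
          rw [← hw_eq x hxab hxc] at h
          exact h.symm
    · -- right condition
      apply hMnon
      have hμIcc : IntegrableOn μf (Icc c (c + δ)) := hμint.congr_set_ae Ioo_ae_eq_Icc.symm
      have hMcont : ContinuousOn (fun x => ∫ t in c..x, μf t) (Icc c (c + δ)) := by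
        have h := intervalIntegral.continuousOn_primitive_interval
          (a := c) (b := c + δ) (f := μf) (μ := volume)
          (by rwa [uIcc_of_le (by linarith : c ≤ c + δ)])
        rwa [uIcc_of_le (by linarith : c ≤ c + δ)] at h
      refine aux_right c δ hδ _ u' hMcont (by simp) hMpos ?_ ?_
      · exact hu'_int.mono_set (fun x hx =>
          ⟨hac.trans hx.1, lt_of_lt_of_le hx.2 hδb⟩)
      · intro x hx hMx
        have hxab : x ∈ Ioo a b := ⟨hac.trans hx.1, lt_of_lt_of_le hx.2 hδb⟩
        have hxc : x ≠ c := ne_of_gt hx.1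
        have hdq := hwdiff c hcab x (Ioo_subset_Icc_self hxab)
        have hmono : (∫ t in c..x, -μf t) ≤ ∫ t in c..x, w' t := by
          apply intervalIntegral.integral_mono_ae_restrict hx.1.le
            ((hμIcc.mono_set (uIcc_subset_Icc ⟨le_refl c, by linarith⟩
              ⟨hx.1.le, hx.2.le⟩)).intervalIntegrable.neg)
            (hw'ii c hcab x (Ioo_subset_Icc_self hxab))
          refine (ae_restrict_iff' measurableSet_Icc).2 ?_
          filter_upwards [hw', hμae, hne c] with t h1 h2 h3 ht
          simp only [Pi.neg_apply]
          have htio : t ∈ Ioo c (c + δ) := ⟨lt_of_le_of_ne ht.1 (Ne.symm h3), ht.2.trans_lt hx.2⟩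
          have htab : t ∈ Ioo a b := ⟨hac.trans htio.1, lt_of_lt_of_le htio.2 hδb⟩
          rw [h1 htab]
          linarith [h2 htio]
        rw [intervalIntegral.integral_neg] at hmono
        have hwxge : 1 - (∫ t in c..x, μf t) ≤ w x := by linarith
        have hwxlt : w x < 1 := (abs_lt.1 (habs1 x hxab hxc)).2
        refine aux_bound hwxlt hwxge hMx (hMpos x ⟨hx.1, hx.2.le⟩) ?_
        have h := psi_inv (u' x)
        rw [← hw_eq x hxab hxc] at h
        exact h.symm
  have habs : ∀ x ∈ Ioo a b, |w x| < 1 := by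
    intro x hx
    by_cases hxc : x = c
    · rw [hxc]; exact abs_lt.2 ⟨hwcgt, hwclt⟩
    · exact habs1 x hx hxc
  have hpos1 : ∀ x ∈ Ioo a b, 0 < 1 - w x ^ 2 := by
    intro x hx
    have h := abs_lt.1 (habs x hx)
    nlinarith [h.1, h.2]
  set g : ℝ → ℝ := fun x => w x / Real.sqrt (1 - w x ^ 2) with hgdef
  set V : ℝ → ℝ := fun x => 1 / (Real.sqrt (1 - w x ^ 2) * (1 - w x ^ 2)) * w' x with hVdef
  have hgcont : ContinuousOn g (Ioo a b) := by
    apply ContinuousOn.div (hwcont.mono Ioo_subset_Icc_self)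
    · exact Real.continuous_sqrt.comp_continuousOn
        (continuousOn_const.sub ((hwcont.mono Ioo_subset_Icc_self).pow 2))
    · exact fun x hx => ne_of_gt (Real.sqrt_pos.2 (hpos1 x hx))
  have hgu' : ∀ x ∈ Ioo a b, x ≠ c → g x = u' x := by
    intro x hx hxc
    simp only [hgdef]
    rw [hw_eq x hx hxc]
    exact psi_inv _
  -- conclusion 2
  have hconc2 : ∀ x ∈ Ioo a b, HasDerivAt u (g x) x := by
    intro x₀ hx₀
    have hgii0 : IntervalIntegrable g volume x₀ x₀ := by
      rw [intervalIntegrable_iff]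
      simp
    have hmeas : StronglyMeasurableAtFilter g (𝓝 x₀) volume :=
      ContinuousOn.stronglyMeasurableAtFilter isOpen_Ioo hgcont x₀ hx₀
    have hFd : HasDerivAt (fun y => ∫ t in x₀..y, g t) (g x₀) x₀ :=
      intervalIntegral.integral_hasDerivAt_right hgii0 hmeas
        (hgcont.continuousAt (isOpen_Ioo.mem_nhds hx₀))
    have hcongr : ∀ y ∈ Icc a b, u y = u x₀ + ∫ t in x₀..y, g t := by
      intro y hy
      have h1 := hudiff x₀ (Ioo_subset_Icc_self hx₀) y hy
      have h2 : ∫ t in x₀..y, u' t = ∫ t in x₀..y, g t := by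
        apply intervalIntegral.integral_congr_ae
        filter_upwards [hne a, hne b, hne c] with t hta htb htc ht
        rw [Set.mem_uIoc] at ht
        have htab : t ∈ Ioo a b := by
          rcases ht with ⟨h3, h4⟩ | ⟨h3, h4⟩
          · exact ⟨hx₀.1.trans h3, lt_of_le_of_ne (h4.trans hy.2) htb⟩
          · exact ⟨lt_of_le_of_ne' (hy.1.trans h3.le) hta, lt_of_le_of_lt h4 hx₀.2⟩
        exact (hgu' t htab htc).symm
      rw [← h2]
      linarith
    have hev : u =ᶠ[𝓝 x₀] fun y => u x₀ + ∫ t in x₀..y, g t :=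
      eventuallyEq_of_mem (Icc_mem_nhds hx₀.1 hx₀.2) hcongr
    exact (hFd.const_add (u x₀)).congr_of_eventuallyEq hev
  -- integrability of V on compact subintervals
  have hVint : ∀ p q : ℝ, a < p → q < b → IntegrableOn V (Icc p q) := by
    intro p q hp hq
    rcases le_or_gt p q with hpq | hpq
    swap
    · rw [Icc_eq_empty (not_le.2 hpq)]; exact integrableOn_empty
    have hsub : Icc p q ⊆ Ioo a b := fun x hx => ⟨hp.trans_le hx.1, hx.2.trans_lt hq⟩
    have hsub' : Icc p q ⊆ Icc a b := hsub.trans Ioo_subset_Icc_self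
    have hDcont : ContinuousOn
        (fun x => 1 / (Real.sqrt (1 - w x ^ 2) * (1 - w x ^ 2))) (Icc p q) := by
      apply continuousOn_const.div
      · exact (Real.continuous_sqrt.comp_continuousOn
          (continuousOn_const.sub ((hwcont.mono hsub').pow 2))).mul
          (continuousOn_const.sub ((hwcont.mono hsub').pow 2))
      · intro x hx
        have h := hpos1 x (hsub hx)
        exact ne_of_gt (mul_pos (Real.sqrt_pos.2 h) h)
    obtain ⟨C, hC⟩ := IsCompact.exists_bound_of_continuousOn isCompact_Icc hDcont
    apply Integrable.mono' ((hw'Icc.mono_set hsub').norm.const_mul C)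
      ((hDcont.aestronglyMeasurable measurableSet_Icc).mul
        (hw'Icc.mono_set hsub').aestronglyMeasurable)
    refine (ae_restrict_iff' measurableSet_Icc).2 ?_
    filter_upwards with x hx
    have hb : ‖1 / (Real.sqrt (1 - w x ^ 2) * (1 - w x ^ 2)) * w' x‖ ≤ C * ‖w' x‖ := by
      rw [norm_mul]
      exact mul_le_mul_of_nonneg_right (hC x hx) (norm_nonneg _)
    exact hb
  have hVii : ∀ p ∈ Ioo a b, ∀ q ∈ Ioo a b, IntervalIntegrable V volume p q := by
    intro p hp q hq
    have hsub : Set.uIcc p q ⊆ Icc (min p q) (max p q) :=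
      Set.uIcc_subset_Icc ⟨min_le_left p q, le_max_left p q⟩
        ⟨min_le_right p q, le_max_right p q⟩
    exact ((hVint (min p q) (max p q) (lt_min hp.1 hq.1) (max_lt hp.2 hq.2)).mono_set
      hsub).intervalIntegrable
  -- key identity on (a, c)
  have hkey₁ : ∀ p q : ℝ, a < p → p ≤ q → q < c → g q - g p = ∫ t in p..q, V t := by
    intro p q hp hpq hqc
    rcases eq_or_lt_of_le hpq with rfl | hpq'
    · simp
    obtain ⟨V₁, hV₁int, hV₁⟩ := hlocAC₁ p q hp hpq hqc
    set V₂ : ℝ → ℝ := (Icc p q).indicator V₁ with hV₂def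
    have hV₂int : Integrable V₂ := hV₁int.integrable_indicator measurableSet_Icc
    have hrep : ∀ y ∈ Icc p q, u' y = u' p + ∫ t in p..y, V₂ t := by
      intro y hy
      rw [hV₁ y hy]
      congr 1
      apply intervalIntegral.integral_congr
      intro t ht
      rw [uIcc_of_le hy.1] at ht
      exact (indicator_of_mem (show t ∈ Icc p q from ⟨ht.1, ht.2.trans hy.2⟩) V₁).symm
    have hae : ∀ᵐ t ∂volume, t ∈ Ioo p q → V t = V₁ t := by
      filter_upwards [ae_hasDerivAt_primitive hV₂int p, haewd] with t h1 h2 ht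
      have htab : t ∈ Ioo a b := ⟨hp.trans ht.1, ((ht.2.trans hqc).trans hcb)⟩
      have htc : t ≠ c := ne_of_lt (ht.2.trans hqc)
      have hu'd : HasDerivAt u' (V₂ t) t :=
        (h1.const_add (u' p)).congr_of_eventuallyEq
          (eventuallyEq_of_mem (Icc_mem_nhds ht.1 ht.2) hrep)
      have hwps : w =ᶠ[𝓝 t] fun y => u' y / Real.sqrt (1 + u' y ^ 2) := by
        apply eventuallyEq_of_mem (isOpen_Ioo.mem_nhds ht)
        intro y hy
        exact hw_eq y ⟨hp.trans hy.1, (hy.2.trans hqc).trans hcb⟩ (ne_of_lt (hy.2.trans hqc))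
      have hcomp : HasDerivAt w
          (1 / (Real.sqrt (1 + u' t ^ 2) * (1 + u' t ^ 2)) * V₂ t) t :=
        ((hasDerivAt_psi (u' t)).comp t hu'd).congr_of_eventuallyEq hwps
      have huniq : w' t = 1 / (Real.sqrt (1 + u' t ^ 2) * (1 + u' t ^ 2)) * V₂ t :=
        (h2 htab).unique hcomp
      have hwt : w t = u' t / Real.sqrt (1 + u' t ^ 2) := hw_eq t htab htc
      have hV₂t : V₂ t = V₁ t := indicator_of_mem (Ioo_subset_Icc_self ht) V₁
      simp only [hVdef]
      rw [hwt, huniq, ← mul_assoc, phi_deriv_mul_psi_deriv (u' t), one_mul, hV₂t]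
    have hIcongr : ∫ t in p..q, V t = ∫ t in p..q, V₁ t := by
      apply intervalIntegral.integral_congr_ae
      filter_upwards [hae, hne q] with t h1 h2 ht
      rw [uIoc_of_le hpq] at ht
      exact h1 ⟨ht.1, lt_of_le_of_ne ht.2 h2⟩
    have hgq : g q = u' q := hgu' q ⟨hp.trans hpq', hqc.trans hcb⟩ (ne_of_lt hqc)
    have hgp : g p = u' p :=
      hgu' p ⟨hp, (hpq.trans_lt hqc).trans hcb⟩ (ne_of_lt (lt_of_le_of_lt hpq hqc))
    rw [hgq, hgp, hIcongr, hV₁ q ⟨hpq, le_refl q⟩]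
    ring
  -- key identity on (c, b)
  have hkey₂ : ∀ p q : ℝ, c < p → p ≤ q → q < b → g q - g p = ∫ t in p..q, V t := by
    intro p q hp hpq hqb
    rcases eq_or_lt_of_le hpq with rfl | hpq'
    · simp
    obtain ⟨V₁, hV₁int, hV₁⟩ := hlocAC₂ p q hp hpq hqb
    set V₂ : ℝ → ℝ := (Icc p q).indicator V₁ with hV₂def
    have hV₂int : Integrable V₂ := hV₁int.integrable_indicator measurableSet_Icc
    have hrep : ∀ y ∈ Icc p q, u' y = u' p + ∫ t in p..y, V₂ t := by
      intro y hy
      rw [hV₁ y hy]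
      congr 1
      apply intervalIntegral.integral_congr
      intro t ht
      rw [uIcc_of_le hy.1] at ht
      exact (indicator_of_mem (show t ∈ Icc p q from ⟨ht.1, ht.2.trans hy.2⟩) V₁).symm
    have hae : ∀ᵐ t ∂volume, t ∈ Ioo p q → V t = V₁ t := by
      filter_upwards [ae_hasDerivAt_primitive hV₂int p, haewd] with t h1 h2 ht
      have htab : t ∈ Ioo a b := ⟨hac.trans (hp.trans ht.1), ht.2.trans hqb⟩
      have htc : t ≠ c := ne_of_gt (hp.trans ht.1)
      have hu'd : HasDerivAt u' (V₂ t) t :=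
        (h1.const_add (u' p)).congr_of_eventuallyEq
          (eventuallyEq_of_mem (Icc_mem_nhds ht.1 ht.2) hrep)
      have hwps : w =ᶠ[𝓝 t] fun y => u' y / Real.sqrt (1 + u' y ^ 2) := by
        apply eventuallyEq_of_mem (isOpen_Ioo.mem_nhds ht)
        intro y hy
        exact hw_eq y ⟨hac.trans (hp.trans hy.1), hy.2.trans hqb⟩ (ne_of_gt (hp.trans hy.1))
      have hcomp : HasDerivAt w
          (1 / (Real.sqrt (1 + u' t ^ 2) * (1 + u' t ^ 2)) * V₂ t) t :=
        ((hasDerivAt_psi (u' t)).comp t hu'd).congr_of_eventuallyEq hwps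
      have huniq : w' t = 1 / (Real.sqrt (1 + u' t ^ 2) * (1 + u' t ^ 2)) * V₂ t :=
        (h2 htab).unique hcomp
      have hwt : w t = u' t / Real.sqrt (1 + u' t ^ 2) := hw_eq t htab htc
      have hV₂t : V₂ t = V₁ t := indicator_of_mem (Ioo_subset_Icc_self ht) V₁
      simp only [hVdef]
      rw [hwt, huniq, ← mul_assoc, phi_deriv_mul_psi_deriv (u' t), one_mul, hV₂t]
    have hIcongr : ∫ t in p..q, V t = ∫ t in p..q, V₁ t := by
      apply intervalIntegral.integral_congr_ae
      filter_upwards [hae, hne q] with t h1 h2 ht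
      rw [uIoc_of_le hpq] at ht
      exact h1 ⟨ht.1, lt_of_le_of_ne ht.2 h2⟩
    have hgq : g q = u' q :=
      hgu' q ⟨hac.trans (hp.trans hpq'), hqb⟩ (ne_of_gt (hp.trans_le hpq))
    have hgp : g p = u' p := hgu' p ⟨hac.trans hp, hpq.trans_lt hqb⟩ (ne_of_gt hp)
    rw [hgq, hgp, hIcongr, hV₁ q ⟨hpq, le_refl q⟩]
    ring
  -- global identity
  have hglob : ∀ x ∈ Ioo a b, g x = g c + ∫ t in c..x, V t := by
    intro x hx
    have hgc : ContinuousAt g c := hgcont.continuousAt (isOpen_Ioo.mem_nhds ⟨hac, hcb⟩)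
    rcases lt_trichotomy x c with hxc | rfl | hxc
    · have hVi : IntegrableOn V (Icc x c) := hVint x c hx.1 hcb
      have hcp : ContinuousOn (fun q => ∫ t in x..q, V t) (Icc x c) := by
        have h := intervalIntegral.continuousOn_primitive_interval
          (a := x) (b := c) (f := V) (μ := volume) (by rwa [uIcc_of_le hxc.le])
        rwa [uIcc_of_le hxc.le] at h
      have hTprim : Tendsto (fun q => ∫ t in x..q, V t) (𝓝[Ico x c] c)
          (𝓝 (∫ t in x..c, V t)) :=
        (hcp c ⟨hxc.le, le_refl c⟩).mono Ico_subset_Icc_self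
      have hTg : Tendsto (fun q => g q - g x) (𝓝[Ico x c] c) (𝓝 (g c - g x)) :=
        (hgc.tendsto.mono_left nhdsWithin_le_nhds).sub_const (g x)
      have hEq : ∀ᶠ q in 𝓝[Ico x c] c, g q - g x = ∫ t in x..q, V t := by
        filter_upwards [self_mem_nhdsWithin] with q hq
        exact hkey₁ x q hx.1 hq.1 hq.2
      haveI hNB : (𝓝[Ico x c] c).NeBot := by
        rw [← mem_closure_iff_nhdsWithin_neBot, closure_Ico (ne_of_lt hxc)]
        exact ⟨hxc.le, le_refl c⟩
      have huniq := tendsto_nhds_unique (hTg.congr' hEq) hTprim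
      rw [intervalIntegral.integral_symm x c]
      linarith
    · simp
    · have hVi : IntegrableOn V (Icc c x) := hVint c x hac hx.2
      have hcp : ContinuousOn (fun p => ∫ t in p..x, V t) (Icc c x) := by
        have h := intervalIntegral.continuousOn_primitive_interval_left
          (a := c) (b := x) (f := V) (μ := volume) (by rwa [uIcc_of_le hxc.le])
        rwa [uIcc_of_le hxc.le] at h
      have hTprim : Tendsto (fun p => ∫ t in p..x, V t) (𝓝[Ioc c x] c)
          (𝓝 (∫ t in c..x, V t)) :=
        (hcp c ⟨le_refl c, hxc.le⟩).mono Ioc_subset_Icc_self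
      have hTg : Tendsto (fun p => g x - g p) (𝓝[Ioc c x] c) (𝓝 (g x - g c)) :=
        (hgc.tendsto.mono_left nhdsWithin_le_nhds).const_sub (g x)
      have hEq : ∀ᶠ p in 𝓝[Ioc c x] c, g x - g p = ∫ t in p..x, V t := by
        filter_upwards [self_mem_nhdsWithin] with p hp
        exact hkey₂ p x hp.1 hp.2 hx.2
      haveI hNB : (𝓝[Ioc c x] c).NeBot := by
        rw [← mem_closure_iff_nhdsWithin_neBot, closure_Ioc (ne_of_lt hxc)]
        exact ⟨le_refl c, hxc.le⟩
      have huniq := tendsto_nhds_unique (hTg.congr' hEq) hTprim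
      linarith
  -- conclusion 4
  have hconc4 : ∀ c₁ d₁ : ℝ, a < c₁ → c₁ ≤ d₁ → d₁ < b → ∃ Vf : ℝ → ℝ,
      IntegrableOn Vf (Icc c₁ d₁) ∧ ∀ x ∈ Icc c₁ d₁, g x = g c₁ + ∫ t in c₁..x, Vf t := by
    intro c₁ d₁ h1 h2 h3
    refine ⟨V, hVint c₁ d₁ h1 h3, ?_⟩
    intro x hx
    have hx' : x ∈ Ioo a b := ⟨h1.trans_le hx.1, hx.2.trans_lt h3⟩
    have hc₁' : c₁ ∈ Ioo a b := ⟨h1, h2.trans_lt h3⟩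
    rw [hglob x hx', hglob c₁ hc₁']
    have hadd : (∫ t in c..c₁, V t) + ∫ t in c₁..x, V t = ∫ t in c..x, V t :=
      intervalIntegral.integral_add_adjacent_intervals (hVii c ⟨hac, hcb⟩ c₁ hc₁')
        (hVii c₁ hc₁' x hx')
    linarith
  refine ⟨abs_lt.2 ⟨hwcgt, hwclt⟩, hconc2, hgcont, hconc4, ?_⟩
  filter_upwards [haewd, hw'] with x h1 h2 hx
  rw [← h2 hx]
  exact h1 hx
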